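/- Let (R, m, k) be an Artinian local ring with canonical module ω_R. Suppose T is a finitely generated R-module with the property that whenever N is a finitely generated R-module with Tor_i^R(T, N) = 0 for all i > 0, then N is free; and suppose T is a direct summand of some syzygy module of ω_R. Then every totally reflexive R-module is free. -/

import Mathlib

open CategoryTheory

/-- A finitely generated module `X` is totally reflexive if there is a doubly infinite
exact complex of finitely generated free modules whose dual complex is also exact,
with `X` a cokernel of one of the differentials. -/
def IsTotallyReflexive (R : Type) [CommRing R] (X : Type) [AddCommGroup X] [Module R X] :
    Prop :=
  ∃ (F : ℤ → ModuleCat.{0} R) (d : ∀ i : ℤ, F i →ₗ[R] F (i + 1)),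
    (∀ i, Module.Free R (F i)) ∧ (∀ i, Module.Finite R (F i)) ∧
    (∀ i, LinearMap.range (d i) = LinearMap.ker (d (i + 1))) ∧
    (∀ i, LinearMap.range ((d (i + 1)).dualMap) = LinearMap.ker ((d i).dualMap)) ∧
    (∃ i, Nonempty (X ≃ₗ[R] ((F (i + 1)) ⧸ LinearMap.range (d i))))

/-- `IsSyzygy R n M N` : `N` is an `n`-th syzygy module of `M`, i.e. a kernel appearing
`n` steps into a resolution of `M` by finitely generated free modules. -/
def IsSyzygy (R : Type) [CommRing R] : ℕ → ModuleCat.{0} R → ModuleCat.{0} R → Prop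
  | 0, M, N => Nonempty ((N : Type) ≃ₗ[R] M)
  | n + 1, M, N => ∃ (F : ModuleCat R) (f : F →ₗ[R] M), Module.Free R F ∧ Module.Finite R F ∧
      Function.Surjective f ∧ IsSyzygy R n (ModuleCat.of R (LinearMap.ker f)) N


open CategoryTheory LinearMap TensorProduct

section Helpers

variable {R : Type} [CommRing R]

theorem exact_conj {A B C A' B' C' : Type} [AddCommGroup A] [Module R A]
    [AddCommGroup B] [Module R B] [AddCommGroup C] [Module R C]
    [AddCommGroup A'] [Module R A'] [AddCommGroup B'] [Module R B']
    [AddCommGroup C'] [Module R C']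
    (f : A →ₗ[R] B) (g : B →ₗ[R] C) (f' : A' →ₗ[R] B') (g' : B' →ₗ[R] C')
    (eA : A' →ₗ[R] A) (eB : B' →ₗ[R] B) (eC : C' →ₗ[R] C)
    (hA : Function.Surjective eA) (hB : Function.Bijective eB) (hC : Function.Injective eC)
    (hf : eB.comp f' = f.comp eA) (hg : eC.comp g' = g.comp eB)
    (h : LinearMap.range f = LinearMap.ker g) :
    LinearMap.range f' = LinearMap.ker g' := by
  have hf' : ∀ a, eB (f' a) = f (eA a) := fun a => LinearMap.congr_fun hf a
  have hg' : ∀ b, eC (g' b) = g (eB b) := fun b => LinearMap.congr_fun hg b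
  ext x
  simp only [LinearMap.mem_range, LinearMap.mem_ker]
  constructor
  · rintro ⟨a, rfl⟩
    apply hC
    rw [hg', hf', map_zero]
    have : f (eA a) ∈ LinearMap.ker g := h ▸ LinearMap.mem_range_self f (eA a)
    exact this
  · intro hx
    have : eB x ∈ LinearMap.range f := by
      rw [h, LinearMap.mem_ker, ← hg', hx, map_zero]
    obtain ⟨a, ha⟩ := this
    obtain ⟨a', rfl⟩ := hA a
    exact ⟨a', hB.injective (by rw [hf', ha])⟩

variable {F : ℤ → ModuleCat.{0} R} (d : ∀ i : ℤ, F i →ₗ[R] F (i + 1))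

/-- Exactness of the complex obtained by tensoring with `M`. -/
def GoodC (M : Type) [AddCommGroup M] [Module R M] : Prop :=
  ∀ i : ℤ, LinearMap.range (lTensor M (d i)) = LinearMap.ker (lTensor M (d (i + 1)))

variable (hex : ∀ i, LinearMap.range (d i) = LinearMap.ker (d (i + 1)))

include hex in
theorem dcomp : ∀ i : ℤ, (d (i + 1)).comp (d i) = 0 := fun i =>
  LinearMap.range_le_ker_iff.mp ((hex i).le)

include hex in
theorem range_le_ker_lTensor (M : Type) [AddCommGroup M] [Module R M] (i : ℤ) :
    LinearMap.range (lTensor M (d i)) ≤ LinearMap.ker (lTensor M (d (i + 1))) := by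
  rw [LinearMap.range_le_ker_iff, ← LinearMap.lTensor_comp, dcomp d hex, LinearMap.lTensor_zero]

/-- Commutation of vertical maps with horizontal ones. -/
theorem rl_comm {M N : Type} [AddCommGroup M] [Module R M] [AddCommGroup N] [Module R N]
    (s : M →ₗ[R] N) (i : ℤ) (x : M ⊗[R] F i) :
    lTensor N (d i) (rTensor (F i) s x) = rTensor (F (i + 1)) s (lTensor M (d i) x) := by
  induction x using TensorProduct.induction_on with
  | zero => simp
  | tmul m f => simp
  | add x y hx hy => simp [hx, hy]

include hex in
theorem good_of_retract {M N : Type} [AddCommGroup M] [Module R M] [AddCommGroup N] [Module R N]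
    (s : M →ₗ[R] N) (r : N →ₗ[R] M) (hrs : r.comp s = LinearMap.id)
    (hN : GoodC d N) : GoodC d M := by
  intro i
  refine le_antisymm (range_le_ker_lTensor d hex M i) ?_
  intro x hx
  have h1 : lTensor N (d (i + 1)) (rTensor (F (i+1)) s x) = 0 := by
    rw [rl_comm, LinearMap.mem_ker.mp hx, map_zero]
  have h2 : rTensor (F (i+1)) s x ∈ LinearMap.range (lTensor N (d i)) := by
    rw [hN i]; exact h1
  obtain ⟨y, hy⟩ := h2
  refine ⟨rTensor (F i) r y, ?_⟩
  rw [rl_comm, hy]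
  have : (rTensor (↑(F (i+1))) r).comp (rTensor (↑(F (i+1))) s) = LinearMap.id := by
    rw [← LinearMap.rTensor_comp, hrs, LinearMap.rTensor_id]
  exact LinearMap.congr_fun this x

end Helpers

section Part2

variable {R : Type} [CommRing R]
variable {F : ℤ → ModuleCat.{0} R} (d : ∀ i : ℤ, F i →ₗ[R] F (i + 1))
variable (hex : ∀ i, LinearMap.range (d i) = LinearMap.ker (d (i + 1)))

include hex in
theorem good_of_flat (M : Type) [AddCommGroup M] [Module R M] [Module.Flat R M] :
    GoodC d M := by
  intro i
  have h1 : Function.Exact (d i) (d (i + 1)) := LinearMap.exact_iff.mpr (hex i).symm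
  have h2 := Module.Flat.lTensor_exact M h1
  exact (LinearMap.exact_iff.mp h2).symm

include hex in
theorem good_E (hfree : ∀ i, Module.Free R (F i)) (hfin : ∀ i, Module.Finite R (F i))
    (hdual : ∀ i, LinearMap.range ((d (i + 1)).dualMap) = LinearMap.ker ((d i).dualMap))
    (E : Type) [AddCommGroup E] [Module R E] [Module.Injective R E] : GoodC d E := by
  haveI : ∀ i, Module.Free R (F i) := hfree
  haveI : ∀ i, Module.Finite R (F i) := hfin
  -- the natural iso `E ⊗ F j ≃ Hom (Dual (F j), E)`
  let θ : ∀ j : ℤ, (E ⊗[R] F j) ≃ₗ[R] (Module.Dual R (F j) →ₗ[R] E) := fun j =>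
    (TensorProduct.comm R E (F j)) ≪≫ₗ
      (TensorProduct.congr (Module.evalEquiv R (F j)) (LinearEquiv.refl R E)) ≪≫ₗ
      (dualTensorHomEquiv R (Module.Dual R (F j)) E)
  have θ_apply : ∀ (j : ℤ) (e : E) (x : F j) (f : Module.Dual R (F j)),
      θ j (e ⊗ₜ x) f = f x • e := by
    intro j e x f
    simp [θ, dualTensorHomEquiv, dualTensorHomEquivOfBasis_apply, dualTensorHom_apply]
  have θnat : ∀ (j : ℤ) (x : E ⊗[R] F j),
      θ (j + 1) (lTensor E (d j) x) = (θ j x).comp ((d j).dualMap) := by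
    intro j x
    induction x using TensorProduct.induction_on with
    | zero => simp
    | tmul e y =>
        ext f
        simp only [lTensor_tmul, LinearMap.comp_apply, θ_apply, LinearMap.dualMap_apply]
    | add x y hx hy => simp [map_add, hx, hy, LinearMap.add_comp]
  intro i
  refine le_antisymm (range_le_ker_lTensor d hex E i) ?_
  intro x hx
  set φ := θ (i + 1) x with hφdef
  have hφ : φ.comp ((d (i + 1)).dualMap) = 0 := by
    have h := θnat (i + 1) x
    rw [LinearMap.mem_ker.mp hx, map_zero] at h
    exact h.symm
  set D := (d i).dualMap with hD
  have hker : LinearMap.ker D ≤ LinearMap.ker φ := by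
    rw [← hdual i]
    rintro f ⟨g, rfl⟩
    exact LinearMap.congr_fun hφ g
  let φbar : (Module.Dual R (F (i + 1)) ⧸ LinearMap.ker D) →ₗ[R] E :=
    Submodule.liftQ (LinearMap.ker D) φ hker
  let e := D.quotKerEquivRange
  let ψ₀ : LinearMap.range D →ₗ[R] E := φbar.comp (e.symm : LinearMap.range D →ₗ[R] _)
  obtain ⟨ψ, hψ⟩ := Module.Injective.out (X := ↥(LinearMap.range D))
    (Y := Module.Dual R (F i)) (LinearMap.range D).subtype
    (Submodule.injective_subtype _) ψ₀
  have hψD : ∀ f, ψ (D f) = φ f := by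
    intro f
    have h1 : ψ (D f) = ψ₀ ⟨D f, LinearMap.mem_range_self D f⟩ :=
      hψ ⟨D f, LinearMap.mem_range_self D f⟩
    rw [h1]
    have h2 : e.symm ⟨D f, LinearMap.mem_range_self D f⟩ = Submodule.Quotient.mk f := by
      rw [LinearEquiv.symm_apply_eq]
      ext
      simp [e, LinearMap.quotKerEquivRange_apply_mk]
    show φbar (e.symm ⟨D f, _⟩) = φ f
    rw [h2]
    simp [φbar]
  refine ⟨(θ i).symm ψ, ?_⟩
  apply (θ (i + 1)).injective
  rw [θnat i]
  simp only [LinearEquiv.apply_symm_apply]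
  ext f
  exact hψD f

include hex in
theorem good_ker {K G M : Type} [AddCommGroup K] [Module R K] [AddCommGroup G] [Module R G]
    [AddCommGroup M] [Module R M]
    (k : K →ₗ[R] G) (p : G →ₗ[R] M)
    (hk : Function.Injective k) (hp : Function.Surjective p)
    (hkp : LinearMap.ker p = LinearMap.range k)
    (hflat : ∀ i : ℤ, Module.Flat R (F i))
    (hG : GoodC d G) (hM : GoodC d M) : GoodC d K := by
  haveI : ∀ i : ℤ, Module.Flat R (F i) := hflat
  have hkT : ∀ j : ℤ, Function.Injective (rTensor (F j) k) := fun j =>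
    Module.Flat.rTensor_preserves_injective_linearMap k hk
  have hpT : ∀ j : ℤ, Function.Surjective (rTensor (F j) p) := fun j =>
    LinearMap.rTensor_surjective (F j) hp
  have hcol : ∀ j : ℤ, LinearMap.ker (rTensor (F j) p) = LinearMap.range (rTensor (F j) k) := by
    intro j
    have hexact : Function.Exact k p := LinearMap.exact_iff.mpr hkp
    exact LinearMap.exact_iff.mp (rTensor_exact (F j) hexact hp)
  have hpk : p.comp k = 0 := by
    rw [← LinearMap.range_le_ker_iff, hkp]
  intro i
  obtain ⟨j, rfl⟩ : ∃ j, i = j + 1 := ⟨i - 1, by ring⟩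
  refine le_antisymm (range_le_ker_lTensor d hex K _) ?_
  intro x hx
  -- b := image of x in G ⊗ F (j+1+1)
  have hb1 : lTensor G (d (j + 1 + 1)) (rTensor (F (j + 1 + 1)) k x) = 0 := by
    rw [rl_comm, LinearMap.mem_ker.mp hx, map_zero]
  have hb2 : rTensor (F (j + 1 + 1)) k x ∈ LinearMap.range (lTensor G (d (j + 1))) := by
    rw [hG (j + 1)]; exact hb1
  obtain ⟨b', hb'⟩ := hb2
  have hc1 : lTensor M (d (j + 1)) (rTensor (F (j + 1)) p b') = 0 := by
    rw [rl_comm, hb']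
    have : (rTensor (F (j+1+1)) p).comp (rTensor (F (j+1+1)) k) = 0 := by
      rw [← LinearMap.rTensor_comp, hpk, LinearMap.rTensor_zero]
    exact LinearMap.congr_fun this x
  have hc2 : rTensor (F (j + 1)) p b' ∈ LinearMap.range (lTensor M (d j)) := by
    rw [hM j]; exact hc1
  obtain ⟨c'', hc''⟩ := hc2
  obtain ⟨b'', hb''⟩ := hpT j c''
  have h3 : rTensor (F (j + 1)) p (b' - lTensor G (d j) b'') = 0 := by
    rw [map_sub, ← rl_comm, hb'', hc'', sub_self]
  have h4 : b' - lTensor G (d j) b'' ∈ LinearMap.range (rTensor (F (j + 1)) k) := by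
    rw [← hcol (j + 1)]; exact h3
  obtain ⟨a, ha⟩ := h4
  refine ⟨a, hkT (j + 1 + 1) ?_⟩
  rw [← rl_comm, ha, map_sub, hb']
  have hdd : lTensor G (d (j + 1)) (lTensor G (d j) b'') = 0 := by
    have := range_le_ker_lTensor d hex G j (LinearMap.mem_range_self _ b'')
    exact LinearMap.mem_ker.mp this
  rw [hdd, sub_zero]

include hex in
theorem good_syzygy (hflat : ∀ i : ℤ, Module.Flat R (F i)) :
    ∀ (n : ℕ) (M N : ModuleCat.{0} R), GoodC d (M : Type) → IsSyzygy R n M N →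
      GoodC d (N : Type) := by
  intro n
  induction n with
  | zero =>
      intro M N hM hsyz
      obtain ⟨e⟩ := hsyz
      exact good_of_retract d hex (e : N →ₗ[R] M) (e.symm : M →ₗ[R] N)
        (by ext x; simp) hM
  | succ n ih =>
      intro M N hM hsyz
      obtain ⟨G, f, hfree, hfin, hsurj, hsyz'⟩ := hsyz
      haveI : Module.Free R G := hfree
      have hGgood : GoodC d (G : Type) := good_of_flat d hex G
      have hker : GoodC d (LinearMap.ker f : Type) :=
        good_ker d hex (LinearMap.ker f).subtype f (Submodule.injective_subtype _)
          hsurj (by rw [Submodule.range_subtype]) hflat hGgood hM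
      exact ih (ModuleCat.of R (LinearMap.ker f)) N hker hsyz'

end Part2

section Part3

open MonoidalCategory

variable {R : Type} [CommRing R]

def fcast (F : ℤ → ModuleCat.{0} R) {a b : ℤ} (h : a = b) : F a →ₗ[R] F b :=
  h ▸ LinearMap.id

theorem fcast_bij (F : ℤ → ModuleCat.{0} R) {a b : ℤ} (h : a = b) :
    Function.Bijective (fcast F h) := by subst h; exact Function.bijective_id

theorem fcast_fcast (F : ℤ → ModuleCat.{0} R) {a b c : ℤ} (h1 : a = b) (h2 : b = c) (x : F a) :
    fcast F h2 (fcast F h1 x) = fcast F (h1.trans h2) x := by subst h1; subst h2; rfl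

theorem fcast_self (F : ℤ → ModuleCat.{0} R) {a : ℤ} (h : a = a) (x : F a) :
    fcast F h x = x := rfl

theorem d_fcast (F : ℤ → ModuleCat.{0} R) (d : ∀ i : ℤ, F i →ₗ[R] F (i + 1)) {a b : ℤ}
    (h : a = b) (h' : a + 1 = b + 1) (x : F a) :
    d b (fcast F h x) = fcast F h' (d a x) := by subst h; rfl

theorem lTensor_fcast_bij (F : ℤ → ModuleCat.{0} R) (M : Type) [AddCommGroup M] [Module R M]
    {a b : ℤ} (h : a = b) :
    Function.Bijective (LinearMap.lTensor M (fcast F h)) := by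
  subst h
  have e : LinearMap.lTensor M (fcast F (rfl : a = a)) = LinearMap.id := by
    rw [show fcast F (rfl : a = a) = LinearMap.id from rfl, LinearMap.lTensor_id]
  rw [e]; exact Function.bijective_id

theorem chain_exactAt (C : ChainComplex (ModuleCat.{0} R) ℕ) (n : ℕ)
    (h : LinearMap.range (C.d (n + 2) (n + 1)).hom = LinearMap.ker (C.d (n + 1) n).hom) :
    C.ExactAt (n + 1) := by
  rw [HomologicalComplex.exactAt_iff' C (n + 2) (n + 1) n (by simp) (by simp),
    ShortComplex.moduleCat_exact_iff]
  intro x hx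
  have : x ∈ LinearMap.ker (C.d (n + 1) n).hom := hx
  rw [← h] at this
  exact this

set_option maxHeartbeats 1000000 in
theorem chain_exactAt'' (C : ChainComplex (ModuleCat.{0} R) ℕ) (n : ℕ)
    (f : (C.X (n + 2) : Type) →ₗ[R] C.X (n + 1)) (g : (C.X (n + 1) : Type) →ₗ[R] C.X n)
    (hf : (C.d (n + 2) (n + 1)).hom = f) (hg : (C.d (n + 1) n).hom = g)
    (h : LinearMap.range f = LinearMap.ker g) : C.ExactAt (n + 1) := by
  apply chain_exactAt C n
  rw [hf, hg]
  exact h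

set_option maxHeartbeats 1000000 in
theorem key (F : ℤ → ModuleCat.{0} R) (d : ∀ i : ℤ, F i →ₗ[R] F (i + 1))
    (hfree : ∀ i, Module.Free R (F i)) (hfin : ∀ i, Module.Finite R (F i))
    (hex : ∀ i, LinearMap.range (d i) = LinearMap.ker (d (i + 1))) (i0 : ℤ)
    (X : Type) [AddCommGroup X] [Module R X]
    (eX : X ≃ₗ[R] ((F (i0 + 1)) ⧸ LinearMap.range (d i0))) :
    ∃ P : ProjectiveResolution (ModuleCat.of R X),
      ∀ (M : Type) [AddCommGroup M] [Module R M], GoodC d M → ∀ n : ℕ,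
        ((((tensoringLeft (ModuleCat R)).obj (ModuleCat.of R M)).mapHomologicalComplex
          (ComplexShape.down ℕ)).obj P.complex).ExactAt (n + 1) := by
  classical
  set K : ℕ → ℤ := fun j => i0 + 1 - j with hKdef
  have hK : ∀ j : ℕ, K (j + 1) + 1 = K j := by intro j; simp only [hKdef]; push_cast; ring
  set δ : ∀ j : ℕ, (F (K (j + 1)) : Type) →ₗ[R] F (K j) :=
    fun j => (fcast F (hK j)).comp (d (K (j + 1))) with hδdef
  have sq : ∀ n : ℕ, (δ n).comp (δ (n + 1)) = 0 := by
    intro n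
    ext x
    simp only [LinearMap.comp_apply, hδdef, LinearMap.zero_apply]
    rw [d_fcast F d (hK (n + 1)) (congrArg (· + 1) (hK (n + 1)))]
    have h0 : d (K (n + 2) + 1) (d (K (n + 2)) x) = 0 :=
      LinearMap.congr_fun (dcomp d hex (K (n + 2))) x
    rw [h0, map_zero, map_zero]
  have hB : ∀ j : ℕ, K (j + 1) = K (j + 2) + 1 := fun j => (hK (j + 1)).symm
  have hC : ∀ j : ℕ, K j = K (j + 2) + 1 + 1 := by
    intro j
    have h1 := hK j
    have h2 : K (j + 2) + 1 = K (j + 1) := hK (j + 1)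
    omega
  have hfcomp : ∀ j : ℕ, (fcast F (hB j)).comp (δ (j + 1)) =
      (d (K (j + 2))).comp (LinearMap.id (M := (F (K (j + 2)) : Type))) := by
    intro j
    ext x
    simp only [LinearMap.comp_apply, hδdef, LinearMap.id_apply]
    rw [fcast_fcast, fcast_self]
  have hgcomp : ∀ j : ℕ, (fcast F (hC j)).comp (δ j) =
      (d (K (j + 2) + 1)).comp (fcast F (hB j)) := by
    intro j
    ext x
    simp only [LinearMap.comp_apply, hδdef]
    rw [fcast_fcast, d_fcast F d (hB j) (congrArg (· + 1) (hB j))]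
  have hδexact : ∀ j : ℕ, LinearMap.range (δ (j + 1)) = LinearMap.ker (δ j) := by
    intro j
    exact exact_conj (d (K (j + 2))) (d (K (j + 2) + 1)) (δ (j + 1)) (δ j)
      LinearMap.id (fcast F (hB j)) (fcast F (hC j))
      Function.surjective_id (fcast_bij F (hB j)) (fcast_bij F (hC j)).injective
      (hfcomp j) (hgcomp j) (hex (K (j + 2)))
  have hTexact : ∀ (M : Type) [AddCommGroup M] [Module R M], GoodC d M → ∀ j : ℕ,
      LinearMap.range (LinearMap.lTensor M (δ (j + 1))) =
        LinearMap.ker (LinearMap.lTensor M (δ j)) := by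
    intro M _ _ hM j
    refine exact_conj (LinearMap.lTensor M (d (K (j + 2))))
      (LinearMap.lTensor M (d (K (j + 2) + 1)))
      (LinearMap.lTensor M (δ (j + 1))) (LinearMap.lTensor M (δ j))
      (LinearMap.lTensor M LinearMap.id) (LinearMap.lTensor M (fcast F (hB j)))
      (LinearMap.lTensor M (fcast F (hC j))) ?_ (lTensor_fcast_bij F M (hB j))
      (lTensor_fcast_bij F M (hC j)).injective ?_ ?_ (hM (K (j + 2)))
    · rw [LinearMap.lTensor_id]; exact Function.surjective_id
    · rw [← LinearMap.lTensor_comp, ← LinearMap.lTensor_comp, hfcomp j]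
    · rw [← LinearMap.lTensor_comp, ← LinearMap.lTensor_comp, hgcomp j]
  -- the resolution complex
  let Cx : ChainComplex (ModuleCat.{0} R) ℕ :=
    ChainComplex.of (fun j => F (K j)) (fun j => ModuleCat.ofHom (δ j))
      (fun n => by ext x; exact LinearMap.congr_fun (sq n) x)
  have hCxd' : ∀ n : ℕ, Cx.d (n + 1) n = ModuleCat.ofHom (δ n) := fun n =>
    ChainComplex.of_d (fun j => F (K j)) (fun j => ModuleCat.ofHom (δ j)) n
  have hCxd : ∀ n : ℕ, (Cx.d (n + 1) n).hom = δ n := fun n => congrArg ModuleCat.Hom.hom (hCxd' n)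
  have h0 : K 0 = i0 + 1 := by simp [hKdef]
  have hi1 : i0 = K 1 := by simp [hKdef]
  -- the augmentation map
  let πlin : (F (K 0) : Type) →ₗ[R] X :=
    ((eX.symm : (F (i0 + 1) ⧸ LinearMap.range (d i0)) →ₗ[R] X).comp
      (Submodule.mkQ (LinearMap.range (d i0)))).comp (fcast F h0)
  have hπsurj : Function.Surjective πlin := by
    simp only [πlin, LinearMap.coe_comp]
    exact (eX.symm.surjective.comp (Submodule.mkQ_surjective _)).comp
      (fcast_bij F h0).surjective
  have hπker : LinearMap.ker πlin = LinearMap.range (δ 0) := by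
    ext x
    simp only [LinearMap.mem_ker, πlin, LinearMap.comp_apply, LinearMap.coe_comp,
      Function.comp_apply]
    constructor
    · intro hx
      have h1 : Submodule.mkQ (LinearMap.range (d i0)) (fcast F h0 x) = 0 := by
        apply eX.symm.injective
        rw [map_zero]
        exact hx
      rw [Submodule.mkQ_apply, Submodule.Quotient.mk_eq_zero] at h1
      obtain ⟨w, hw⟩ := h1
      refine ⟨fcast F hi1 w, ?_⟩
      show fcast F (hK 0) (d (K 1) (fcast F hi1 w)) = x
      rw [d_fcast F d hi1 (congrArg (· + 1) hi1), fcast_fcast, hw, fcast_fcast, fcast_self]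
    · rintro ⟨y, rfl⟩
      have hmem : fcast F h0 (fcast F (hK 0) (d (K 1) y)) ∈ LinearMap.range (d i0) := by
        rw [fcast_fcast]
        exact ⟨fcast F hi1.symm y,
          d_fcast F d hi1.symm (congrArg (· + 1) hi1.symm) y⟩
      have h2 : Submodule.mkQ (LinearMap.range (d i0)) (fcast F h0 (δ 0 y)) = 0 := by
        rw [Submodule.mkQ_apply, Submodule.Quotient.mk_eq_zero]
        exact hmem
      show eX.symm (Submodule.mkQ (LinearMap.range (d i0)) (fcast F h0 (δ 0 y))) = 0
      rw [h2, map_zero]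
  have cond : Cx.d 1 0 ≫ ModuleCat.ofHom πlin = 0 := by
    ext y
    have h1 : δ 0 y ∈ LinearMap.ker πlin := by rw [hπker]; exact ⟨y, rfl⟩
    show πlin ((Cx.d 1 0).hom y) = 0
    rw [show (Cx.d 1 0).hom = δ 0 from hCxd 0]
    exact h1
  refine ⟨{ complex := Cx,
            projective := ?_,
            π := (ChainComplex.toSingle₀Equiv Cx (ModuleCat.of R X)).symm ⟨ModuleCat.ofHom πlin, cond⟩,
            quasiIso := ?_ }, ?_⟩
  · intro n
    haveI := hfree (K n)
    exact ModuleCat.projective_of_free (Module.Free.chooseBasis R (F (K n)))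
  · constructor
    intro n
    match n with
    | 0 =>
        rw [ChainComplex.quasiIsoAt₀_iff, ShortComplex.quasiIso_iff_of_zeros']
        rotate_left
        · exact Cx.shape 0 0 (by simp)
        · rfl
        · rfl
        constructor
        · rw [ShortComplex.moduleCat_exact_iff]
          intro x hx
          have hx' : πlin x = 0 := by
            have e : ((ChainComplex.toSingle₀Equiv Cx (ModuleCat.of R X)).symm
                ⟨ModuleCat.ofHom πlin, cond⟩).f 0 = ModuleCat.ofHom πlin :=
              ChainComplex.toSingle₀Equiv_symm_apply_f_zero _ _
            have e2 := congrArg (fun φ => ModuleCat.Hom.hom φ x) e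
            exact e2.symm.trans hx
          have : x ∈ LinearMap.range (δ 0) := by rw [← hπker]; exact hx'
          obtain ⟨y, hy⟩ := this
          refine ⟨y, ?_⟩
          show (Cx.d 1 0).hom y = x
          rw [show (Cx.d 1 0).hom = δ 0 from hCxd 0]; exact hy
        · rw [ModuleCat.epi_iff_surjective]
          have e : ((ChainComplex.toSingle₀Equiv Cx (ModuleCat.of R X)).symm
              ⟨ModuleCat.ofHom πlin, cond⟩).f 0 = ModuleCat.ofHom πlin :=
            ChainComplex.toSingle₀Equiv_symm_apply_f_zero _ _
          show Function.Surjective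
            (((ChainComplex.toSingle₀Equiv Cx (ModuleCat.of R X)).symm ⟨ModuleCat.ofHom πlin, cond⟩).f 0)
          rw [e]
          exact hπsurj
    | (n + 1) =>
        rw [quasiIsoAt_iff_exactAt']
        · apply chain_exactAt
          rw [show (Cx.d (n + 2) (n + 1)).hom = δ (n + 1) from hCxd (n + 1), hCxd n]
          exact hδexact n
        · exact ChainComplex.exactAt_succ_single_obj _ _
  · intro M _ _ hM n
    have e2 : (((((tensoringLeft (ModuleCat R)).obj (ModuleCat.of R M)).mapHomologicalComplex
        (ComplexShape.down ℕ)).obj Cx).d (n + 2) (n + 1)).hom =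
        LinearMap.lTensor M (δ (n + 1)) := by
      rw [Functor.mapHomologicalComplex_obj_d,
        show Cx.d (n + 2) (n + 1) = ModuleCat.ofHom (δ (n + 1)) from hCxd' (n + 1)]
      rfl
    have e1 : (((((tensoringLeft (ModuleCat R)).obj (ModuleCat.of R M)).mapHomologicalComplex
        (ComplexShape.down ℕ)).obj Cx).d (n + 1) n).hom = LinearMap.lTensor M (δ n) := by
      rw [Functor.mapHomologicalComplex_obj_d, hCxd' n]
      rfl
    exact chain_exactAt'' _ n (LinearMap.lTensor M (δ (n + 1))) (LinearMap.lTensor M (δ n))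
      e2 e1 (hTexact M hM n)

end Part3

open MonoidalCategory

theorem subsingleton_of_isZero {R : Type} [CommRing R] {M : ModuleCat.{0} R}
    (h : Limits.IsZero M) : Subsingleton M := by
  refine ⟨fun a b => ?_⟩
  have h1 : (𝟙 M : M ⟶ M) = 0 := h.eq_of_src _ _
  have ha : a = (0 : M) := LinearMap.congr_fun (congrArg ModuleCat.Hom.hom h1) a
  have hb : b = (0 : M) := LinearMap.congr_fun (congrArg ModuleCat.Hom.hom h1) b
  rw [ha, hb]


/-- Observation 2.13: over an Artinian local ring with canonical module `ω_R`
(the injective envelope `E` of the residue field), if `T` is a proj-test module that is a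
direct summand of a syzygy of `ω_R`, then every totally reflexive module is free
(`R` is G-regular). -/
theorem gRegular_of_test_module_summand_of_syzygy
    (R : Type) [CommRing R] [IsArtinianRing R] [IsLocalRing R]
    (E : Type) [AddCommGroup E] [Module R E] [Module.Injective R E]
    (ι : (R ⧸ IsLocalRing.maximalIdeal R) →ₗ[R] E) (hι : Function.Injective ι)
    (hess : ∀ N : Submodule R E, N ≠ ⊥ → N ⊓ LinearMap.range ι ≠ ⊥)
    (T : Type) [AddCommGroup T] [Module R T] [Module.Finite R T]
    (htest : ∀ (N : Type) [AddCommGroup N] [Module R N], Module.Finite R N →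
      (∀ i : ℕ, 0 < i →
        Subsingleton ((((Tor (ModuleCat R) i).obj (ModuleCat.of R T)).obj
          (ModuleCat.of R N)))) →
      Module.Free R N)
    (hsyz : ∃ (n : ℕ) (Z C : ModuleCat R), IsSyzygy R n (ModuleCat.of R E) Z ∧
      Nonempty ((T × (C : Type)) ≃ₗ[R] Z)) :
    ∀ (X : Type) [AddCommGroup X] [Module R X], Module.Finite R X →
      IsTotallyReflexive R X → Module.Free R X := by
  intro X _ _ hfinX hTR
  obtain ⟨F, d, hfree, hfin, hex, hdual, i0, ⟨eX⟩⟩ := hTR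
  have hflat : ∀ i : ℤ, Module.Flat R (F i) := fun i => by
    haveI := hfree i; infer_instance
  have hEgood : GoodC d E := good_E d hex hfree hfin hdual E
  obtain ⟨n, Z, Cc, hsyzZ, ⟨eT⟩⟩ := hsyz
  have hZgood : GoodC d (Z : Type) :=
    good_syzygy d hex hflat n (ModuleCat.of R E) Z hEgood hsyzZ
  have hTgood : GoodC d T := by
    refine good_of_retract d hex
      ((eT : (T × (Cc : Type)) →ₗ[R] Z).comp (LinearMap.inl R T Cc))
      ((LinearMap.fst R T Cc).comp (eT.symm : (Z : Type) →ₗ[R] (T × (Cc : Type))))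
      ?_ hZgood
    ext x
    simp only [LinearMap.coe_comp, Function.comp_apply, LinearMap.coe_inl,
      LinearEquiv.coe_coe, LinearEquiv.symm_apply_apply, LinearMap.fst_apply,
      LinearMap.id_coe, id_eq, LinearMap.inl_apply]
  obtain ⟨P, hP⟩ := key F d hfree hfin hex i0 X eX
  apply htest X hfinX
  intro i hi
  obtain ⟨m, rfl⟩ : ∃ m, i = m + 1 := ⟨i - 1, by omega⟩
  have hzero : Limits.IsZero
      (((((tensoringLeft (ModuleCat R)).obj (ModuleCat.of R T)).mapHomologicalComplex
        (ComplexShape.down ℕ)).obj P.complex).homology (m + 1)) :=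
    (HomologicalComplex.exactAt_iff_isZero_homology _ (m + 1)).mp (hP T hTgood m)
  have hiso := P.isoLeftDerivedObj ((tensoringLeft (ModuleCat R)).obj (ModuleCat.of R T)) (m + 1)
  exact subsingleton_of_isZero (hzero.of_iso hiso)
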